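/- arXiv:2511.06867 — 2 statements merged into one kernel-verified Lean document; each statement's English description precedes it below -/
import Mathlib

section
/- For every n ≥ 1 and every unit vector ψ in the n-qubit space (ℂ²)^⊗n, the Groverian entanglement measure is bounded above by the fidelity-based coherence measure: E_g(ψ) ≤ C_f(ψ). Consequently (1 − C_f(ψ)²)/2 ≤ (1 − E_g(ψ)²)/2, i.e., the bound on the SKW-3 success probability never exceeds the bound on the SKW-2 success probability. -/
open scoped BigOperators Kronecker ComplexOrder Matrix

namespace SKW

noncomputable section

/-- Bit strings of length `n`: vertices of the `n`-dimensional hypercube /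
    computational basis labels of `n` qubits. -/
abbrev BV (n : ℕ) := Fin n → Bool

/-- Inner product `⟨v|w⟩`, conjugate-linear in the first argument. -/
def ip {α : Type*} [Fintype α] (v w : α → ℂ) : ℂ :=
  ∑ i, (starRingEnd ℂ) (v i) * w i

/-- Squared `ℓ²`-norm of a vector of amplitudes. -/
def normSq {α : Type*} [Fintype α] (v : α → ℂ) : ℝ :=
  ∑ i, ‖v i‖ ^ 2

/-- Flip the `d`-th bit of `x` (i.e. `x ⊕ e_d`). -/
def flipBit {n : ℕ} (x : BV n) (d : Fin n) : BV n := Function.update x d (!x d)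

/-- The shift operator `S = Σ_{d,x} |d, x ⊕ e_d⟩⟨d, x|` on `ℂ^n ⊗ ℂ^N`. -/
def shift (n : ℕ) : Matrix (Fin n × BV n) (Fin n × BV n) ℂ :=
  Matrix.of fun p q => if p.1 = q.1 ∧ p.2 = flipBit q.2 q.1 then 1 else 0

/-- The coin-space equal superposition `|S^c⟩ = (1/√n) Σ_d |d⟩`. -/
def sc (n : ℕ) : Fin n → ℂ := fun _ => ((1 / Real.sqrt n : ℝ) : ℂ)

/-- The node-space equal superposition `|η⟩ = (1/√N) Σ_x |x⟩`, `N = 2^n`. -/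
def eta (n : ℕ) : BV n → ℂ := fun _ => ((1 / Real.sqrt ((2 : ℝ) ^ n) : ℝ) : ℂ)

/-- Grover coin `G = 2|S^c⟩⟨S^c| − I`. -/
def grover (n : ℕ) : Matrix (Fin n) (Fin n) ℂ :=
  (2 : ℂ) • Matrix.vecMulVec (sc n) (fun d => (starRingEnd ℂ) (sc n d)) - 1

/-- Rank-one projector `|a⟩⟨a|` onto a basis vector. -/
def projV {α : Type*} [Fintype α] [DecidableEq α] (a : α) : Matrix α α ℂ :=
  Matrix.of fun x y => if x = a ∧ y = a then 1 else 0

/-- Perturbed coin `C = G ⊗ I + (−I − G) ⊗ |x_tg⟩⟨x_tg|`. -/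
def coin (n : ℕ) (t : BV n) : Matrix (Fin n × BV n) (Fin n × BV n) ℂ :=
  grover n ⊗ₖ (1 : Matrix (BV n) (BV n) ℂ) +
    (-(1 : Matrix (Fin n) (Fin n) ℂ) - grover n) ⊗ₖ projV t

/-- Perturbed evolution operator `V = S·C`. -/
def walkOp (n : ℕ) (t : BV n) : Matrix (Fin n × BV n) (Fin n × BV n) ℂ :=
  shift n * coin n t

/-- Number of iterations `τ = ⌊(π/2)√(2^{n−1})⌋`. -/
def tau (n : ℕ) : ℕ := ⌊(Real.pi / 2) * Real.sqrt ((2 : ℝ) ^ (n - 1))⌋₊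

/-- Tensor product of a coin vector with a node vector. -/
def tensorCN {n : ℕ} (c : Fin n → ℂ) (v : BV n → ℂ) : Fin n × BV n → ℂ :=
  fun p => c p.1 * v p.2

/-- Computational basis vector `|a⟩`. -/
def basisVec {α : Type*} [DecidableEq α] (a : α) : α → ℂ :=
  fun x => if x = a then 1 else 0

/-- Target state `|Γ⟩ = |S^c⟩ ⊗ |x_tg⟩`. -/
def gammaSt (n : ℕ) (t : BV n) : Fin n × BV n → ℂ :=
  tensorCN (sc n) (basisVec t)

/-- Average success probability of the SKW-1 algorithm on initial node state `ψ`. -/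
def P1 (n : ℕ) (ψ : BV n → ℂ) : ℝ :=
  (1 / (2 : ℝ) ^ n) * ∑ t : BV n,
    ‖ip (gammaSt n t) ((walkOp n t ^ tau n).mulVec (tensorCN (sc n) ψ))‖ ^ 2

/-- Coherence fraction `f_c(ψ) = |⟨η|ψ⟩|²`. -/
def fc (n : ℕ) (ψ : BV n → ℂ) : ℝ := ‖ip (eta n) ψ‖ ^ 2

/-- Kronecker product of `n` single-qubit matrices, as a matrix on `(ℂ²)^⊗n`. -/
def kronN {n : ℕ} (U : Fin n → Matrix Bool Bool ℂ) : Matrix (BV n) (BV n) ℂ :=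
  Matrix.of fun x y => ∏ j, U j (x j) (y j)

/-- Tensor product of `n` single-qubit vectors. -/
def tensorVec {n : ℕ} (u : Fin n → Bool → ℂ) : BV n → ℂ :=
  fun x => ∏ j, u j (x j)

/-- Density matrix: positive semidefinite with trace one. -/
def IsDensity {α : Type*} [Fintype α] [DecidableEq α] (ρ : Matrix α α ℂ) : Prop :=
  ρ.PosSemidef ∧ ρ.trace = 1

/-- Separable state: finite convex combination of tensor products of
single-qubit density matrices. -/
def IsSep {n : ℕ} (σ : Matrix (BV n) (BV n) ℂ) : Prop :=
  ∃ (m : ℕ) (p : Fin m → ℝ) (ρ : Fin m → Fin n → Matrix Bool Bool ℂ),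
    (∀ i, 0 ≤ p i) ∧ ∑ i, p i = 1 ∧ (∀ i j, IsDensity (ρ i j)) ∧
      σ = ∑ i, (p i : ℂ) • kronN (ρ i)

/-- Fidelity `⟨ψ|ρ|ψ⟩` between a pure state and a density matrix. -/
def fid {α : Type*} [Fintype α] (ψ : α → ℂ) (ρ : Matrix α α ℂ) : ℝ :=
  (ip ψ (ρ.mulVec ψ)).re

/-- Groverian entanglement measure `E_g(ψ) = min_{σ separable} √(1 − ⟨ψ|σ|ψ⟩)`. -/
def Eg {n : ℕ} (ψ : BV n → ℂ) : ℝ :=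
  sInf {r : ℝ | ∃ σ, IsSep σ ∧ r = Real.sqrt (1 - fid ψ σ)}

/-- Incoherent state: density matrix diagonal in the computational basis. -/
def IsIncoherent {α : Type*} [Fintype α] [DecidableEq α] (δ : Matrix α α ℂ) : Prop :=
  IsDensity δ ∧ ∀ x y, x ≠ y → δ x y = 0

/-- Fidelity-based coherence measure `C_f(ψ) = min_{δ incoherent} √(1 − ⟨ψ|δ|ψ⟩)`. -/
def Cf {α : Type*} [Fintype α] [DecidableEq α] (ψ : α → ℂ) : ℝ :=
  sInf {r : ℝ | ∃ δ, IsIncoherent δ ∧ r = Real.sqrt (1 - fid ψ δ)}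

/-- Pauli X. -/
def PX : Matrix Bool Bool ℂ := Matrix.of fun a b => if a = b then 0 else 1

/-- Pauli Y. -/
def PY : Matrix Bool Bool ℂ :=
  Matrix.of fun a b => if a = b then 0 else if a then Complex.I else -Complex.I

/-- Pauli Z. -/
def PZ : Matrix Bool Bool ℂ :=
  Matrix.of fun a b => if a = b then (if a then -1 else 1) else 0

/-- The 2×2 Hadamard matrix. -/
def Had : Matrix Bool Bool ℂ :=
  Matrix.of fun a b => ((1 / Real.sqrt 2 : ℝ) : ℂ) * (if a && b then -1 else 1)

/-- `H^{⊗n}`. -/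
def HadN (n : ℕ) : Matrix (BV n) (BV n) ℂ := kronN fun _ => Had

/-- Membership in `{X, Y, Z}`. -/
def IsPauliXYZ (V : Matrix Bool Bool ℂ) : Prop := V = PX ∨ V = PY ∨ V = PZ

/-- Maximal average success probability of SKW-2: optimize over a layer of
single-qubit unitaries applied to the node register. -/
def P2 (n : ℕ) (ψ : BV n → ℂ) : ℝ :=
  sSup {r : ℝ | ∃ U : Fin n → Matrix Bool Bool ℂ,
    (∀ j, U j ∈ Matrix.unitaryGroup Bool ℂ) ∧ r = P1 n ((kronN U).mulVec ψ)}

/-- Maximal average success probability of SKW-3: a layer of Pauli gates from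
`{X,Y,Z}` followed by `H^{⊗n}`. -/
def P3 (n : ℕ) (ψ : BV n → ℂ) : ℝ :=
  sSup {r : ℝ | ∃ V : Fin n → Matrix Bool Bool ℂ,
    (∀ j, IsPauliXYZ (V j)) ∧ r = P1 n ((HadN n * kronN V).mulVec ψ)}

/-- Even Hamming-weight predicate. -/
def evenPar {m : ℕ} (x : BV m) : Prop :=
  Even (Finset.univ.filter (fun j => x j = true)).card

instance {m : ℕ} (x : BV m) : Decidable (evenPar x) := by
  unfold evenPar; infer_instance

/-- Equal superposition over even-parity vertices. -/
def etaE (m : ℕ) : BV m → ℂ :=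
  fun x => if evenPar x then ((1 / Real.sqrt ((2 : ℝ) ^ m / 2) : ℝ) : ℂ) else 0

/-- Projection onto even-parity vertices. -/
def projE {m : ℕ} (ψ : BV m → ℂ) : BV m → ℂ :=
  fun x => if evenPar x then ψ x else 0

/-- Optimized perturbed evolution `V_opt = S(G ⊗ I)S·C`. -/
def walkOptOp (m : ℕ) (t : BV m) : Matrix (Fin m × BV m) (Fin m × BV m) ℂ :=
  shift m * (grover m ⊗ₖ (1 : Matrix (BV m) (BV m) ℂ)) * shift m * coin m t

/-- `τ_opt = ⌊(π/(2√2))√N⌋`. -/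
def tauOpt (m : ℕ) : ℕ :=
  ⌊(Real.pi / (2 * Real.sqrt 2)) * Real.sqrt ((2 : ℝ) ^ m)⌋₊

/-- Average success probability of the optimized OSKW-1 algorithm. -/
def P1opt (m : ℕ) (ψ : BV m → ℂ) : ℝ :=
  (1 / ((2 : ℝ) ^ m / 2)) * ∑ t ∈ Finset.univ.filter (fun t : BV m => evenPar t),
    ‖ip (gammaSt m t)
      ((walkOptOp m t ^ tauOpt m).mulVec (tensorCN (sc m) (projE ψ)))‖ ^ 2

/-- Coherence fraction with respect to the even-parity equal superposition. -/
def fcE (m : ℕ) (ψ : BV m → ℂ) : ℝ := ‖ip (etaE m) ψ‖ ^ 2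

/-- Parity bit of a bit string. -/
def parityBit {n : ℕ} (x : BV n) : Bool :=
  Nat.bodd (Finset.univ.filter (fun j => x j = true)).card

/-- Embed an `n`-qubit node state into the even-parity subspace of the
`(n+1)`-dimensional hypercube by appending a parity bit. -/
def embedEven {n : ℕ} (ψ : BV n → ℂ) : BV (n + 1) → ℂ :=
  fun x =>
    if x (Fin.last n) = parityBit (fun j : Fin n => x j.castSucc)
    then ψ (fun j : Fin n => x j.castSucc) else 0

/-- Maximal average success probability of OSKW-2. -/
def P2opt (n : ℕ) (ψ : BV n → ℂ) : ℝ :=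
  sSup {r : ℝ | ∃ U : Fin n → Matrix Bool Bool ℂ,
    (∀ j, U j ∈ Matrix.unitaryGroup Bool ℂ) ∧
      r = P1opt (n + 1) (embedEven ((kronN U).mulVec ψ))}

/-- Maximal average success probability of OSKW-3. -/
def P3opt (n : ℕ) (ψ : BV n → ℂ) : ℝ :=
  sSup {r : ℝ | ∃ V : Fin n → Matrix Bool Bool ℂ,
    (∀ j, IsPauliXYZ (V j)) ∧
      r = P1opt (n + 1) (embedEven ((HadN n * kronN V).mulVec ψ))}

/-- Input density matrix `ρ_in = |S^c⟩⟨S^c| ⊗ ρ`. -/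
def rhoIn (n : ℕ) (ρ : Matrix (BV n) (BV n) ℂ) :
    Matrix (Fin n × BV n) (Fin n × BV n) ℂ :=
  Matrix.vecMulVec (sc n) (fun d => (starRingEnd ℂ) (sc n d)) ⊗ₖ ρ

/-- Average success probability of SKW-1 with a mixed initial node state. -/
def P1mix (n : ℕ) (ρ : Matrix (BV n) (BV n) ℂ) : ℝ :=
  (1 / (2 : ℝ) ^ n) * ∑ t : BV n,
    ((walkOp n t ^ tau n * rhoIn n ρ * (walkOp n t ^ tau n).conjTranspose *
      Matrix.vecMulVec (gammaSt n t) (fun p => (starRingEnd ℂ) (gammaSt n t p))).trace).re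

/-- Coherence fraction `f_c(ρ) = ⟨η|ρ|η⟩` of a mixed state. -/
def fcMix (n : ℕ) (ρ : Matrix (BV n) (BV n) ℂ) : ℝ := fid (eta n) ρ

/-- The all-zeros basis state `|0ⁿ⟩`. -/
def zeroVec (n : ℕ) : BV n → ℂ := basisVec (fun _ => false)

/-- The single-qubit state `|+⟩`. -/
def plusVec : Bool → ℂ := fun _ => ((1 / Real.sqrt 2 : ℝ) : ℂ)

/-- Product (unentangled) pure state. -/
def IsProductVec {n : ℕ} (ψ : BV n → ℂ) : Prop :=
  ∃ u : Fin n → Bool → ℂ, (∀ j, normSq (u j) = 1) ∧ ψ = tensorVec u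



lemma projV_density {α : Type*} [Fintype α] [DecidableEq α] (a : α) :
    IsDensity (projV a) := by
  constructor
  · refine Matrix.PosSemidef.of_dotProduct_mulVec_nonneg ?_ ?_
    · ext x y
      simp [projV, Matrix.conjTranspose, and_comm]
    · intro x
      have : dotProduct (star x) ((projV a) *ᵥ x) = (starRingEnd ℂ) (x a) * x a := by
        simp [dotProduct, Matrix.mulVec, projV, Finset.mul_sum, mul_ite, mul_zero,
          ite_and, Finset.sum_ite_eq]
      rw [this, ← Complex.normSq_eq_conj_mul_self]
      exact_mod_cast Complex.normSq_nonneg _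
  · simp [Matrix.trace, Matrix.diag, projV]

lemma kronN_projV {n : ℕ} (b : BV n) : kronN (fun j => projV (b j)) = projV b := by
  ext x y
  simp only [kronN, projV, Matrix.of_apply]
  by_cases h : x = b ∧ y = b
  · obtain ⟨hx, hy⟩ := h
    subst hx; subst hy
    simp
  · rw [if_neg h]
    rcases not_and_or.mp h with h1 | h1
    · obtain ⟨j, hj⟩ := Function.ne_iff.mp h1
      exact Finset.prod_eq_zero (Finset.mem_univ j) (by simp [hj])
    · obtain ⟨j, hj⟩ := Function.ne_iff.mp h1
      exact Finset.prod_eq_zero (Finset.mem_univ j) (by simp [hj])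

lemma incoherent_isSep {n : ℕ} {δ : Matrix (BV n) (BV n) ℂ}
    (h : IsIncoherent δ) : IsSep δ := by
  obtain ⟨⟨hpsd, htr⟩, hdiag⟩ := h
  set e := (Fintype.equivFin (BV n)).symm with he
  have hreal : ∀ x : BV n, ((δ x x).re : ℂ) = δ x x := by
    intro x
    have := congrFun (congrFun hpsd.1 x) x
    simp only [Matrix.conjTranspose_apply] at this
    exact Complex.conj_eq_iff_re.mp this
  have hdnn : ∀ x : BV n, 0 ≤ (δ x x).re := by
    intro x
    have h0 : (0 : ℂ) ≤ δ x x := by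
      have h1 := hpsd.dotProduct_mulVec_nonneg (Pi.single x 1)
      simpa [dotProduct, Matrix.mulVec, Pi.single_apply, apply_ite, mul_ite, mul_one,
        mul_zero, ite_mul, zero_mul, one_mul, Finset.sum_ite_eq, Finset.sum_ite_eq'] using h1
    exact (Complex.le_def.mp h0).1
  refine ⟨Fintype.card (BV n), fun i => (δ (e i) (e i)).re,
    fun i j => projV (e i j), fun i => hdnn _, ?_, fun i j => projV_density _, ?_⟩
  · have hsum : ∑ i, δ (e i) (e i) = δ.trace :=
      Fintype.sum_equiv e _ _ (fun i => rfl)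
    have : (∑ i, δ (e i) (e i)).re = 1 := by rw [hsum, htr]; simp
    rw [← this, Complex.re_sum]
  · funext x y
    have hterm : ∀ i, (((δ (e i) (e i)).re : ℂ) • kronN (fun j => projV (e i j))) x y
        = ((δ (e i) (e i)).re : ℂ) * (if x = e i ∧ y = e i then 1 else 0) := by
      intro i
      rw [kronN_projV]
      simp [projV]
    rw [Matrix.sum_apply]
    simp only [hterm]
    rw [Fintype.sum_equiv e
      (fun i => ((δ (e i) (e i)).re : ℂ) * (if x = e i ∧ y = e i then 1 else 0))
      (fun b => ((δ b b).re : ℂ) * (if x = b ∧ y = b then 1 else 0)) (fun i => rfl)]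
    by_cases hxy : x = y
    · subst hxy
      simp [and_self, mul_ite, mul_one, mul_zero, Finset.sum_ite_eq, hreal]
    · rw [hdiag x y hxy]
      symm
      apply Finset.sum_eq_zero
      intro b _
      rw [if_neg, mul_zero]
      rintro ⟨h1, h2⟩
      exact hxy (h1.trans h2.symm)

/-- The Groverian entanglement is bounded above by the fidelity-based
coherence, hence the SKW-3 success bound never exceeds the SKW-2 bound. -/
theorem groverian_le_coherence :
    ∀ n : ℕ, 1 ≤ n → ∀ ψ : BV n → ℂ, normSq ψ = 1 →
      Eg ψ ≤ Cf ψ ∧ (1 - Cf ψ ^ 2) / 2 ≤ (1 - Eg ψ ^ 2) / 2 := by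
  intro n _ ψ _
  have hsub : {r : ℝ | ∃ δ, IsIncoherent δ ∧ r = Real.sqrt (1 - fid ψ δ)} ⊆
      {r : ℝ | ∃ σ, IsSep σ ∧ r = Real.sqrt (1 - fid ψ σ)} := by
    rintro r ⟨δ, hδ, rfl⟩
    exact ⟨δ, incoherent_isSep hδ, rfl⟩
  have hCne : {r : ℝ | ∃ δ, IsIncoherent δ ∧ r = Real.sqrt (1 - fid ψ δ)}.Nonempty := by
    refine ⟨_, projV (fun _ => false), ⟨projV_density _, fun x y hxy => ?_⟩, rfl⟩
    simp only [projV, Matrix.of_apply]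
    rw [if_neg]
    rintro ⟨h1, h2⟩
    exact hxy (h1.trans h2.symm)
  have hbdd : BddBelow {r : ℝ | ∃ σ, IsSep σ ∧ r = Real.sqrt (1 - fid ψ σ)} := by
    refine ⟨0, ?_⟩
    rintro r ⟨σ, _, rfl⟩
    exact Real.sqrt_nonneg _
  have h1 : Eg ψ ≤ Cf ψ := csInf_le_csInf hbdd hCne hsub
  have hEg0 : 0 ≤ Eg ψ := by
    apply le_csInf (Set.Nonempty.mono hsub hCne)
    rintro r ⟨σ, _, rfl⟩
    exact Real.sqrt_nonneg _
  refine ⟨h1, ?_⟩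
  have := pow_le_pow_left₀ hEg0 h1 2
  linarith


end

end SKW
end

section
/- For every N ≥ 1 and every unit vector ψ in ℂ^N, the fidelity-based coherence measure C_f(ψ) vanishes if and only if ψ is a computational basis state up to a global phase, i.e., ψ = c·|i⟩ for some index i and some complex number c with |c| = 1. Moreover 0 ≤ C_f(ψ) ≤ 1 for every unit vector ψ. -/
open scoped BigOperators Kronecker ComplexOrder Matrix

namespace SKW

noncomputable section

-- auxiliary lemmas

lemma projV_eq_diagonal {α : Type*} [Fintype α] [DecidableEq α] (a : α) :
    projV a = Matrix.diagonal (fun x => if x = a then (1:ℂ) else 0) := by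
  ext x y
  simp only [projV, Matrix.of_apply, Matrix.diagonal]
  by_cases hx : x = a <;> by_cases hy : y = a <;> subst_eqs <;>
    simp_all [Matrix.diagonal_apply, eq_comm]

lemma projV_incoherent {α : Type*} [Fintype α] [DecidableEq α] (a : α) :
    IsIncoherent (projV a) := by
  refine ⟨⟨?_, ?_⟩, ?_⟩
  · rw [projV_eq_diagonal]
    exact Matrix.PosSemidef.diagonal (fun x => by dsimp; split <;> norm_num)
  · rw [projV_eq_diagonal, Matrix.trace_diagonal]
    simp
  · intro x y hxy
    simp only [projV, Matrix.of_apply, ite_eq_right_iff]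
    rintro ⟨rfl, rfl⟩; exact absurd rfl hxy

lemma fid_projV {α : Type*} [Fintype α] [DecidableEq α] (ψ : α → ℂ) (a : α) :
    fid ψ (projV a) = ‖ψ a‖ ^ 2 := by
  simp only [fid, ip, projV, Matrix.mulVec, dotProduct, Matrix.of_apply]
  rw [show (∑ i, (starRingEnd ℂ) (ψ i) * ∑ j, (if i = a ∧ j = a then (1:ℂ) else 0) * ψ j)
      = ∑ i, (if i = a then (starRingEnd ℂ) (ψ a) * ψ a else 0) from ?_]
  · rw [show (∑ i, if i = a then (starRingEnd ℂ) (ψ a) * ψ a else 0)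
        = (starRingEnd ℂ) (ψ a) * ψ a from by simp [Finset.sum_ite_eq']]
    rw [mul_comm, Complex.mul_conj]
    simp [Complex.sq_norm]
  · refine Finset.sum_congr rfl fun i _ => ?_
    by_cases hi : i = a
    · subst hi
      simp [Finset.sum_ite_eq']
    · simp [hi]

lemma diag_nonneg_of_incoherent {α : Type*} [Fintype α] [DecidableEq α]
    {δ : Matrix α α ℂ} (hδ : IsIncoherent δ) (i : α) :
    0 ≤ (δ i i).re ∧ (δ i i).im = 0 := by
  have h := hδ.1.1.dotProduct_mulVec_nonneg (basisVec i)
  have hval : dotProduct (star (basisVec i)) (δ.mulVec (basisVec i)) = δ i i := by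
    simp only [dotProduct, Matrix.mulVec, basisVec, Pi.star_apply,
      mul_ite, mul_one, mul_zero, Finset.sum_ite_eq', Finset.mem_univ, if_true,
      apply_ite (star : ℂ → ℂ), star_one, star_zero, ite_mul, one_mul, zero_mul,
      Finset.sum_ite_eq]
  rw [hval] at h
  rw [Complex.le_def] at h
  exact ⟨h.1, h.2.symm⟩

lemma fid_incoherent {α : Type*} [Fintype α] [DecidableEq α]
    (ψ : α → ℂ) {δ : Matrix α α ℂ} (hδ : IsIncoherent δ) :
    fid ψ δ = ∑ i, (δ i i).re * ‖ψ i‖ ^ 2 := by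
  have hmv : ∀ x, δ.mulVec ψ x = δ x x * ψ x := by
    intro x
    simp only [Matrix.mulVec, dotProduct]
    rw [Finset.sum_eq_single x (fun y _ hy => by rw [hδ.2 x y (Ne.symm hy), zero_mul])
      (fun h => absurd (Finset.mem_univ x) h)]
  simp only [fid, ip, hmv, Complex.re_sum]
  refine Finset.sum_congr rfl fun i _ => ?_
  have h1 : (starRingEnd ℂ) (ψ i) * (δ i i * ψ i)
      = δ i i * ((‖ψ i‖ ^ 2 : ℝ) : ℂ) := by
    have h2 : ψ i * (starRingEnd ℂ) (ψ i) = ((Complex.normSq (ψ i) : ℝ) : ℂ) :=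
      Complex.mul_conj (ψ i)
    calc (starRingEnd ℂ) (ψ i) * (δ i i * ψ i)
        = δ i i * (ψ i * (starRingEnd ℂ) (ψ i)) := by ring
      _ = δ i i * ((Complex.normSq (ψ i) : ℝ) : ℂ) := by rw [h2]
      _ = δ i i * ((‖ψ i‖ ^ 2 : ℝ) : ℂ) := by rw [Complex.sq_norm]
  rw [h1, Complex.mul_re, Complex.ofReal_re, Complex.ofReal_im]
  ring

/-- The fidelity-based coherence of a unit vector vanishes iff the vector is a
computational basis state up to a global phase, and it always lies in `[0,1]`. -/
theorem coherence_zero_iff_basis :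
    ∀ N : ℕ, 1 ≤ N → ∀ ψ : Fin N → ℂ, normSq ψ = 1 →
      (Cf ψ = 0 ↔ ∃ (i : Fin N) (c : ℂ), ‖c‖ = 1 ∧ ψ = c • basisVec i) ∧
      0 ≤ Cf ψ ∧ Cf ψ ≤ 1 := by
  intro N hN ψ hψ
  haveI : Nonempty (Fin N) := ⟨⟨0, hN⟩⟩
  obtain ⟨i0, -, hi0⟩ := Finset.exists_max_image Finset.univ
    (fun i => ‖ψ i‖ ^ 2) ⟨Classical.arbitrary (Fin N), Finset.mem_univ _⟩
  set M := ‖ψ i0‖ ^ 2 with hM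
  set S := {r : ℝ | ∃ δ, IsIncoherent δ ∧ r = Real.sqrt (1 - fid ψ δ)} with hS
  have hmem : ∀ i : Fin N, Real.sqrt (1 - ‖ψ i‖ ^ 2) ∈ S := by
    intro i
    exact ⟨projV i, projV_incoherent i, by rw [fid_projV]⟩
  have hne : S.Nonempty := ⟨_, hmem i0⟩
  have hbdd : BddBelow S := ⟨0, fun r ⟨δ, _, hr⟩ => hr ▸ Real.sqrt_nonneg _⟩
  have hnonneg : 0 ≤ Cf ψ := le_csInf hne (fun r ⟨δ, _, hr⟩ => hr ▸ Real.sqrt_nonneg _)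
  -- each fidelity ≤ M
  have hfid_le : ∀ δ : Matrix (Fin N) (Fin N) ℂ, IsIncoherent δ → fid ψ δ ≤ M := by
    intro δ hδ
    rw [fid_incoherent ψ hδ]
    have htr : ∑ i, (δ i i).re = 1 := by
      have := hδ.1.2
      have : (δ.trace).re = 1 := by rw [this]; simp
      simpa [Matrix.trace, Matrix.diag, Complex.re_sum] using this
    calc ∑ i, (δ i i).re * ‖ψ i‖ ^ 2
        ≤ ∑ i, (δ i i).re * M :=
          Finset.sum_le_sum fun i _ =>
            mul_le_mul_of_nonneg_left (hi0 i (Finset.mem_univ i))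
              (diag_nonneg_of_incoherent hδ i).1
      _ = M := by rw [← Finset.sum_mul, htr, one_mul]
  have hlow : Real.sqrt (1 - M) ≤ Cf ψ := by
    refine le_csInf hne ?_
    rintro r ⟨δ, hδ, rfl⟩
    exact Real.sqrt_le_sqrt (by linarith [hfid_le δ hδ])
  have hsum : ∑ i, ‖ψ i‖ ^ 2 = 1 := hψ
  have hMle1 : M ≤ 1 := by
    rw [← hsum]
    exact Finset.single_le_sum (f := fun i => ‖ψ i‖ ^ 2)
      (fun i _ => sq_nonneg _) (Finset.mem_univ i0)
  constructor
  · constructor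
    · intro h0
      -- M ≥ 1
      have hM1 : 1 ≤ M := by
        by_contra hlt
        push_neg at hlt
        have : 0 < Real.sqrt (1 - M) := Real.sqrt_pos.mpr (by linarith)
        linarith [hlow, h0 ▸ this]
      have hMeq : M = 1 := le_antisymm hMle1 hM1
      -- all other amplitudes vanish
      have hrest : ∀ j, j ≠ i0 → ψ j = 0 := by
        intro j hj
        have hsplit : ‖ψ i0‖ ^ 2
            + ∑ i ∈ Finset.univ.erase i0, ‖ψ i‖ ^ 2 = 1 := by
          rw [Finset.add_sum_erase Finset.univ (fun i => ‖ψ i‖ ^ 2)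
            (Finset.mem_univ i0)]
          exact hsum
        have hz : ∑ i ∈ Finset.univ.erase i0, ‖ψ i‖ ^ 2 = 0 := by
          have hMd : M = ‖ψ i0‖ ^ 2 := hM
          linarith
        have := (Finset.sum_eq_zero_iff_of_nonneg
          (fun i _ => sq_nonneg (‖ψ i‖))).mp hz j
          (Finset.mem_erase.mpr ⟨hj, Finset.mem_univ j⟩)
        have : ‖ψ j‖ = 0 := by
          have h := sq_eq_zero_iff.mp this
          exact h
        exact norm_eq_zero.mp this
      refine ⟨i0, ψ i0, ?_, ?_⟩
      · have : ‖ψ i0‖ ^ 2 = 1 := hMeq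
        nlinarith [norm_nonneg (ψ i0)]
      · funext j
        by_cases hj : j = i0
        · subst hj; simp [basisVec]
        · simp [basisVec, hj, hrest j hj]
    · rintro ⟨i, c, hc, rfl⟩
      have hfi : fid (c • basisVec i) (projV i) = 1 := by
        rw [fid_projV]
        simp [basisVec, hc]
      have h0mem : (0 : ℝ) ∈ S := ⟨projV i, projV_incoherent i, by rw [hfi]; simp⟩
      exact le_antisymm (csInf_le hbdd h0mem) hnonneg
  · refine ⟨hnonneg, ?_⟩
    exact le_trans (csInf_le hbdd (hmem i0))
      (Real.sqrt_le_one.mpr (by nlinarith [sq_nonneg (‖ψ i0‖)]))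

end

end SKW
end
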